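/- arXiv:1703.09597 — 2 statements merged into one kernel-verified Lean document; each statement's English description precedes it below -/
import Mathlib

section
/- For every k ≥ 1, the derivation ε_{2k} of the free Lie algebra on {x,y}, defined by ε_{2k}(x) = ad(x)^{2k}(y) and ε_{2k}(y) = Σ_{0 ≤ j < k} (−1)^j [ad(x)^j(y), ad(x)^{2k−1−j}(y)], annihilates the element [x,y], i.e. ε_{2k}([x,y]) = 0. -/
open FreeLieAlgebra

/-- `adX n` is `ad(x)^n(y)` in the free Lie algebra on two generators `x = of 0`, `y = of 1`. -/
noncomputable def adX (n : ℕ) : FreeLieAlgebra ℚ (Fin 2) :=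
  (fun z => ⁅of ℚ (0 : Fin 2), z⁆)^[n] (of ℚ (1 : Fin 2))

lemma adX_succ (n : ℕ) : adX (n + 1) = ⁅of ℚ (0 : Fin 2), adX n⁆ :=
  Function.iterate_succ_apply' _ _ _

/-- for every k ≥ 1, the derivation ε_{2k} with
ε_{2k}(x) = ad(x)^{2k}(y) and ε_{2k}(y) = Σ_{0 ≤ j < k} (−1)^j [ad(x)^j(y), ad(x)^{2k−1−j}(y)]
annihilates [x,y]. -/
theorem eps2k_annihilates_bracket (k : ℕ) (hk : 1 ≤ k)
    (D : LieDerivation ℚ (FreeLieAlgebra ℚ (Fin 2)) (FreeLieAlgebra ℚ (Fin 2)))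
    (hx : D (of ℚ (0 : Fin 2)) = adX (2 * k))
    (hy : D (of ℚ (1 : Fin 2)) =
      ∑ j ∈ Finset.range k, ((-1 : ℚ) ^ j) • ⁅adX j, adX (2 * k - 1 - j)⁆) :
    D ⁅of ℚ (0 : Fin 2), of ℚ (1 : Fin 2)⁆ = 0 := by
  set g : ℕ → FreeLieAlgebra ℚ (Fin 2) :=
    fun j => ((-1 : ℚ) ^ j) • ⁅adX j, adX (2 * k - j)⁆ with hg
  have key : ⁅of ℚ (0 : Fin 2),
      ∑ j ∈ Finset.range k, ((-1 : ℚ) ^ j) • ⁅adX j, adX (2 * k - 1 - j)⁆⁆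
      = ∑ j ∈ Finset.range k, (g j - g (j + 1)) := by
    rw [← LieAlgebra.ad_apply (R := ℚ), map_sum]
    simp only [LieAlgebra.ad_apply]
    refine Finset.sum_congr rfl fun j hj => ?_
    have hjk : j < k := Finset.mem_range.mp hj
    have h1 : 2 * k - 1 - j + 1 = 2 * k - j := by omega
    have h2 : 2 * k - (j + 1) = 2 * k - 1 - j := by omega
    rw [lie_smul, leibniz_lie, hg]
    simp only [h2]
    rw [← adX_succ, ← adX_succ, h1, pow_succ]
    module
  rw [D.apply_lie_eq_add, hx, hy, key, Finset.sum_range_sub', hg]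
  have hgk : ((-1 : ℚ) ^ k) • ⁅adX k, adX (2 * k - k)⁆ = 0 := by
    have : 2 * k - k = k := by omega
    rw [this, lie_self, smul_zero]
  simp only [hgk, pow_zero, one_smul, sub_zero]
  have : adX 0 = of ℚ (1 : Fin 2) := rfl
  rw [this, Nat.sub_zero, ← lie_skew, neg_add_cancel]
end

section
/- For every k ≥ 0, the derivations ε_{2k} and ε₂ of the free Lie algebra on {x,y} commute: [ε_{2k}, ε₂] = ε_{2k}∘ε₂ − ε₂∘ε_{2k} = 0. -/
open FreeLieAlgebra

lemma adX_zero : adX 0 = of ℚ (1 : Fin 2) := rfl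

lemma lieSpan_of_top :
    LieSubalgebra.lieSpan ℚ (FreeLieAlgebra ℚ (Fin 2)) (Set.range (of ℚ)) = ⊤ := by
  set S := LieSubalgebra.lieSpan ℚ (FreeLieAlgebra ℚ (Fin 2)) (Set.range (of ℚ))
  rw [eq_top_iff]
  intro z _
  let f : Fin 2 → S := fun i => ⟨of ℚ i, LieSubalgebra.subset_lieSpan ⟨i, rfl⟩⟩
  let g := S.incl.comp (lift ℚ f)
  have hg : ∀ w, g w = w := by
    have : g = LieHom.id := hom_ext (F₁ := g) (F₂ := LieHom.id) (fun i => by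
      simp [g, f, lift_of_apply])
    intro w; rw [this]; rfl
  have : g z ∈ S := (lift ℚ f z).2
  rwa [hg z] at this

/-- for every k ≥ 0, the derivations ε_{2k} and ε₂ commute:
ε_{2k}∘ε₂ − ε₂∘ε_{2k} = 0.  (The uniform formula for ε_{2k} specializes for k = 0
to ε₀(x) = y, ε₀(y) = 0.) -/
theorem eps2k_commutes_with_eps2 (k : ℕ)
    (D E : LieDerivation ℚ (FreeLieAlgebra ℚ (Fin 2)) (FreeLieAlgebra ℚ (Fin 2)))
    (hDx : D (of ℚ (0 : Fin 2)) = adX (2 * k))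
    (hDy : D (of ℚ (1 : Fin 2)) =
      ∑ j ∈ Finset.range k, ((-1 : ℚ) ^ j) • ⁅adX j, adX (2 * k - 1 - j)⁆)
    (hEx : E (of ℚ (0 : Fin 2)) = ⁅of ℚ (0 : Fin 2), ⁅of ℚ (0 : Fin 2), of ℚ (1 : Fin 2)⁆⁆)
    (hEy : E (of ℚ (1 : Fin 2)) = ⁅of ℚ (1 : Fin 2), ⁅of ℚ (0 : Fin 2), of ℚ (1 : Fin 2)⁆⁆) :
    ∀ z : FreeLieAlgebra ℚ (Fin 2), D (E z) - E (D z) = 0 := by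
  set x := of ℚ (0 : Fin 2)
  set y := of ℚ (1 : Fin 2)
  set c : FreeLieAlgebra ℚ (Fin 2) := ⁅x, y⁆ with hc
  -- E is the (negative) inner derivation given by c
  have adc : ∀ w, (LieDerivation.ad ℚ (FreeLieAlgebra ℚ (Fin 2)) (-c)) w = ⁅w, c⁆ := by
    intro w
    rw [LieDerivation.ad_apply_apply, neg_lie, lie_skew]
  have hE : ∀ z, E z = ⁅z, c⁆ := by
    have heq : Set.EqOn E (LieDerivation.ad ℚ _ (-c)) (Set.range (of ℚ)) := by
      rintro _ ⟨i, rfl⟩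
      fin_cases i
      · rw [adc]; exact hEx
      · rw [adc]; exact hEy
    intro z
    have hz : z ∈ LieSubalgebra.lieSpan ℚ (FreeLieAlgebra ℚ (Fin 2)) (Set.range (of ℚ)) := by
      rw [lieSpan_of_top]; trivial
    rw [LieDerivation.eqOn_lieSpan heq hz, adc]
  -- D c = 0
  have hDc : D c = 0 := by
    rw [hc, LieDerivation.apply_lie_eq_add, hDx, hDy]
    have expand : ∀ j, j < k →
        ((-1 : ℚ) ^ j) • ⁅x, ⁅adX j, adX (2 * k - 1 - j)⁆⁆ =
          ((-1 : ℚ) ^ j) • ⁅adX j, adX (2 * k - j)⁆ -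
            ((-1 : ℚ) ^ (j + 1)) • ⁅adX (j + 1), adX (2 * k - (j + 1))⁆ := by
      intro j hj
      have h1 : 2 * k - 1 - j + 1 = 2 * k - j := by omega
      have h2 : 2 * k - (j + 1) = 2 * k - 1 - j := by omega
      rw [leibniz_lie, ← adX_succ, h2, ← h1, ← adX_succ, h1]
      rw [pow_succ]
      module
    rw [show ⁅x, ∑ j ∈ Finset.range k, ((-1 : ℚ) ^ j) • ⁅adX j, adX (2 * k - 1 - j)⁆⁆ =
        ∑ j ∈ Finset.range k, ⁅x, ((-1 : ℚ) ^ j) • ⁅adX j, adX (2 * k - 1 - j)⁆⁆ by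
      exact map_sum (LieAlgebra.ad ℚ (FreeLieAlgebra ℚ (Fin 2)) x)
        (fun j => ((-1 : ℚ) ^ j) • ⁅adX j, adX (2 * k - 1 - j)⁆) (Finset.range k)]
    have : ∑ j ∈ Finset.range k, ⁅x, ((-1 : ℚ) ^ j) • ⁅adX j, adX (2 * k - 1 - j)⁆⁆ =
        ∑ j ∈ Finset.range k,
          (((-1 : ℚ) ^ j) • ⁅adX j, adX (2 * k - j)⁆ -
            ((-1 : ℚ) ^ (j + 1)) • ⁅adX (j + 1), adX (2 * k - (j + 1))⁆) := by
      refine Finset.sum_congr rfl fun j hj => ?_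
      rw [lie_smul]
      exact expand j (Finset.mem_range.mp hj)
    rw [add_comm]
    rw [this, Finset.sum_range_sub' (fun j => ((-1 : ℚ) ^ j) • ⁅adX j, adX (2 * k - j)⁆)]
    have hk : 2 * k - k = k := by omega
    rw [hk, lie_self, smul_zero, sub_zero, pow_zero, one_smul, Nat.sub_zero, adX_zero,
      ← lie_skew y (adX (2 * k))]
    abel
  intro z
  rw [hE z, hE (D z), LieDerivation.apply_lie_eq_add, hDc]
  simp
end
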